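/- Let I = {i₁ < … < i_r} ⊆ {1,…,m} and J = {j₁ < … < j_r} ⊆ {1,…,n}. For every k ∈ {1,…,m} and l ∈ {1,…,n}, one has in R_{m,n}: {x_{kl}, Δ_{I,J}} = ∑_{q=1}^{r} sign(i_q − k)·x_{i_q l}·D_q + ∑_{q=1}^{r} sign(j_q − l)·x_{k j_q}·E_q, where D_q is the determinant of the r×r matrix whose rows are indexed, in order, by (i₁, …, i_{q−1}, k, i_{q+1}, …, i_r) and whose columns are indexed by (j₁, …, j_r) (entry (a,b) being the corresponding variable x), and E_q is the determinant of the r×r matrix with rows (i₁, …, i_r) and columns, in order, (j₁, …, j_{q−1}, l, j_{q+1}, …, j_r). -/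
import Mathlib


open MvPolynomial

theorem Derivation.map_prod' {R A : Type*} [CommRing R] [CommRing A] [Algebra R A]
    (D : Derivation R A A) {ι : Type*} [DecidableEq ι] (s : Finset ι) (f : ι → A) :
    D (∏ i ∈ s, f i) = ∑ i ∈ s, D (f i) * ∏ j ∈ s.erase i, f j := by
  induction s using Finset.induction_on with
  | empty => simp
  | @insert a s ha ih =>
    rw [Finset.prod_insert ha, D.leibniz, smul_eq_mul, smul_eq_mul, ih,
      Finset.sum_insert ha, Finset.erase_insert ha, Finset.mul_sum]
    rw [add_comm]
    congr 1
    · ring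
    · apply Finset.sum_congr rfl
      intro i hi
      rw [Finset.erase_insert_of_ne (by rintro rfl; exact ha hi),
        Finset.prod_insert (by simp [Finset.mem_erase]; intro _ h; exact ha h)]
      ring

theorem Derivation.map_det {R A : Type*} [CommRing R] [CommRing A] [Algebra R A]
    (D : Derivation R A A) {r : ℕ} (M : Matrix (Fin r) (Fin r) A) :
    D M.det = ∑ j : Fin r, (M.updateCol j (fun i => D (M i j))).det := by
  simp_rw [Matrix.det_apply]
  rw [map_sum, Finset.sum_comm]
  apply Finset.sum_congr rfl
  intro σ _
  rw [Units.smul_def, map_zsmul, D.map_prod', Finset.smul_sum]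
  apply Finset.sum_congr rfl
  intro x _
  rw [Units.smul_def]
  congr 1
  rw [← Finset.mul_prod_erase (Finset.univ : Finset (Fin r))
    (fun i => M.updateCol x (fun i => D (M i x)) (σ i) i) (Finset.mem_univ x)]
  rw [Matrix.updateCol_self]
  congr 1
  apply Finset.prod_congr rfl
  intro j hj
  rw [Matrix.updateCol_ne]
  exact (Finset.mem_erase.mp hj).1

theorem det_updateCol_eq_sum {A : Type*} [CommRing A] {r : ℕ}
    (M : Matrix (Fin r) (Fin r) A) (b : Fin r) (w : Fin r → A) :
    (M.updateCol b w).det = ∑ p, w p * (M.updateCol b (Pi.single p 1)).det := by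
  rw [← Matrix.cramer_apply]
  have hw : w = ∑ p, w p • (Pi.single p (1 : A) : Fin r → A) := by
    funext a
    simp [Pi.single_apply, Finset.sum_ite_eq', eq_comm]
  conv_lhs => rw [hw]
  rw [map_sum]
  simp only [LinearMap.map_smul, Finset.sum_apply, Pi.smul_apply, smul_eq_mul,
    Matrix.cramer_apply]

theorem det_updCol_single {A : Type*} [CommRing A] {r : ℕ}
    (M : Matrix (Fin r) (Fin r) A) (b p : Fin r) :
    (M.updateCol b (Pi.single p 1)).det = (M.updateRow p (Pi.single b 1)).det := by
  rw [← Matrix.det_transpose (M.updateCol b (Pi.single p 1)), ← Matrix.updateRow_transpose,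
    ← Matrix.adjugate_apply, ← Matrix.adjugate_transpose, Matrix.transpose_apply,
    Matrix.adjugate_apply]

theorem det_updateRow_eq_sum {A : Type*} [CommRing A] {r : ℕ}
    (M : Matrix (Fin r) (Fin r) A) (q : Fin r) (v : Fin r → A) :
    (M.updateRow q v).det = ∑ b, v b * (M.updateCol b (Pi.single q 1)).det := by
  rw [← Matrix.det_transpose, ← Matrix.updateCol_transpose, det_updateCol_eq_sum]
  apply Finset.sum_congr rfl
  intro b _
  congr 1
  rw [det_updCol_single, Matrix.updateRow_transpose, Matrix.det_transpose]


/-- The quadratic Poisson bracket on the polynomial algebra of the matrix affine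
Poisson space `M_{m,n}`. -/
noncomputable def pois {m n : ℕ} (f g : MvPolynomial (Fin m × Fin n) ℂ) :
    MvPolynomial (Fin m × Fin n) ℂ :=
  ∑ i : Fin m, ∑ k : Fin m, ∑ j : Fin n, ∑ l : Fin n,
    (((k : ℤ) - (i : ℤ)).sign + ((l : ℤ) - (j : ℤ)).sign) •
      (X (i, l) * X (k, j) * pderiv (i, j) f * pderiv (k, l) g)

/-- The minor `Δ_{I,J}` (equal to `0` by convention if `|I| ≠ |J|`). -/
noncomputable def Delta {m n : ℕ} (I : Finset (Fin m)) (J : Finset (Fin n)) :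
    MvPolynomial (Fin m × Fin n) ℂ :=
  if h : J.card = I.card then
    Matrix.det (Matrix.of fun a b : Fin I.card =>
      X ((I.orderIsoOfFin rfl a).1, (J.orderIsoOfFin h b).1))
  else 0

/-- Evaluation of a polynomial at a matrix. -/
noncomputable def evalM {m n : ℕ} (Y : Matrix (Fin m) (Fin n) ℂ)
    (f : MvPolynomial (Fin m × Fin n) ℂ) : ℂ :=
  eval (fun p => Y p.1 p.2) f

theorem pois_X_left {m n : ℕ} (k₀ : Fin m) (l₀ : Fin n) (g : MvPolynomial (Fin m × Fin n) ℂ) :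
    pois (X (k₀, l₀)) g = ∑ k : Fin m, ∑ l : Fin n,
      (((k : ℤ) - (k₀ : ℤ)).sign + ((l : ℤ) - (l₀ : ℤ)).sign) •
        (X (k₀, l) * X (k, l₀) * pderiv (k, l) g) := by
  unfold pois
  have h : ∀ (i k : Fin m) (j l : Fin n),
      (((k : ℤ) - (i : ℤ)).sign + ((l : ℤ) - (j : ℤ)).sign) •
        (X (i, l) * X (k, j) * pderiv (i, j) (X (k₀, l₀) : MvPolynomial (Fin m × Fin n) ℂ)
          * pderiv (k, l) g)
      = if i = k₀ then (if j = l₀ then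
          (((k : ℤ) - (i : ℤ)).sign + ((l : ℤ) - (j : ℤ)).sign) •
            (X (i, l) * X (k, j) * pderiv (k, l) g) else 0) else 0 := by
    intro i k j l
    rcases eq_or_ne i k₀ with rfl | hi
    · rcases eq_or_ne j l₀ with rfl | hj
      · simp [pderiv_X_self, mul_one]
      · rw [pderiv_X_of_ne (by simp [Prod.ext_iff]; exact fun h => hj h.symm), if_pos rfl,
          if_neg hj]
        simp
    · rw [pderiv_X_of_ne (by simp [Prod.ext_iff]; intro h; exact absurd h.symm hi), if_neg hi]
      simp
  simp only [h]
  simp only [Finset.sum_ite_eq', Finset.mem_univ, if_true, Finset.sum_const_zero,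
    Finset.sum_ite_irrel]


/-- **The bracket of a matrix entry with a minor** `{x_{kl}, Δ_{I,J}}` equals the sum
`∑_q sign(i_q−k)·x_{i_q l}·Δ_{I(i_q→k),J} + ∑_q sign(j_q−l)·x_{k j_q}·Δ_{I,J(j_q→l)}`,
where the replaced-row/column minors keep the rows/columns in their listed order. -/
theorem bracket_entry_minor_formula (m n : ℕ) (r : ℕ)
    (I : Finset (Fin m)) (J : Finset (Fin n))
    (hI : I.card = r) (hJ : J.card = r)
    (k : Fin m) (l : Fin n) :
    pois (X (k, l)) (Delta I J) =
      (∑ q : Fin r,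
        ((((I.orderIsoOfFin hI q).1 : ℤ) - (k : ℤ)).sign) •
          (X ((I.orderIsoOfFin hI q).1, l) *
            Matrix.det (Matrix.of fun a b : Fin r =>
              X ((if a = q then k else (I.orderIsoOfFin hI a).1),
                 (J.orderIsoOfFin hJ b).1))))
      +
      (∑ q : Fin r,
        ((((J.orderIsoOfFin hJ q).1 : ℤ) - (l : ℤ)).sign) •
          (X (k, (J.orderIsoOfFin hJ q).1) *
            Matrix.det (Matrix.of fun a b : Fin r =>
              X ((I.orderIsoOfFin hI a).1,
                 (if b = q then l else (J.orderIsoOfFin hJ b).1))))) := by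
  subst hI
  have hDelta : Delta I J = Matrix.det (Matrix.of fun a b : Fin I.card =>
      (X ((I.orderIsoOfFin rfl a).1, (J.orderIsoOfFin hJ b).1) :
        MvPolynomial (Fin m × Fin n) ℂ)) := by
    unfold Delta
    rw [dif_pos hJ]
  rw [hDelta, pois_X_left]
  set iq : Fin I.card → Fin m := fun a => ((I.orderIsoOfFin rfl a : I) : Fin m) with hiq
  set jq : Fin I.card → Fin n := fun b => ((J.orderIsoOfFin hJ b : J) : Fin n) with hjq
  set M : Matrix (Fin I.card) (Fin I.card) (MvPolynomial (Fin m × Fin n) ℂ) :=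
    Matrix.of fun a b => X (iq a, jq b) with hM
  show (∑ k' : Fin m, ∑ l' : Fin n,
      (((k' : ℤ) - (k : ℤ)).sign + ((l' : ℤ) - (l : ℤ)).sign) •
        (X (k, l') * X (k', l) * pderiv (k', l') M.det))
    = (∑ q : Fin I.card, (((iq q : ℕ) : ℤ) - (k : ℤ)).sign •
        (X (iq q, l) * (Matrix.of fun a b =>
          (X (if a = q then k else iq a, jq b) :
            MvPolynomial (Fin m × Fin n) ℂ)).det))
    + (∑ q : Fin I.card, (((jq q : ℕ) : ℤ) - (l : ℤ)).sign •
        (X (k, jq q) * (Matrix.of fun a b =>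
          (X (iq a, if b = q then l else jq b) :
            MvPolynomial (Fin m × Fin n) ℂ)).det))
  -- abbreviation for the elementary cofactor determinants
  set C : Fin I.card → Fin I.card → MvPolynomial (Fin m × Fin n) ℂ :=
    fun p b => (M.updateCol b (Pi.single p 1)).det with hC
  -- the key pointwise computation
  have key : ∀ (k' : Fin m) (l' : Fin n),
      (((k' : ℤ) - (k : ℤ)).sign + ((l' : ℤ) - (l : ℤ)).sign) •
        (X (k, l') * X (k', l) * pderiv (k', l') M.det)
      = ∑ p : Fin I.card, ∑ b : Fin I.card,
          if (iq p, jq b) = (k', l') then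
            (((k' : ℤ) - (k : ℤ)).sign + ((l' : ℤ) - (l : ℤ)).sign) •
              (X (k, l') * X (k', l) * C p b) else 0 := by
    intro k' l'
    rw [(pderiv (k', l')).map_det M]
    have hcol : ∀ b : Fin I.card,
        (M.updateCol b fun a => pderiv (k', l') (M a b)).det
        = ∑ p : Fin I.card,
            (if (iq p, jq b) = (k', l') then (1 : MvPolynomial (Fin m × Fin n) ℂ) else 0)
              * C p b := by
      intro b
      rw [det_updateCol_eq_sum]
      apply Finset.sum_congr rfl
      intro p _
      congr 1
      show pderiv (k', l') (X (iq p, jq b)) = _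
      rw [pderiv_X, Pi.single_apply]
    simp only [hcol]
    rw [Finset.mul_sum, Finset.smul_sum]
    rw [Finset.sum_comm]
    apply Finset.sum_congr rfl; intro p _
    rw [Finset.mul_sum, Finset.smul_sum]
    apply Finset.sum_congr rfl; intro b _
    split_ifs with h
    · rw [one_mul]
    · rw [zero_mul, mul_zero, smul_zero]
  simp only [key]
  -- collapse the outer double sum
  rw [show (∑ k' : Fin m, ∑ l' : Fin n,
      ∑ p : Fin I.card, ∑ b : Fin I.card,
        if (iq p, jq b) = (k', l') then
          (((k' : ℤ) - (k : ℤ)).sign + ((l' : ℤ) - (l : ℤ)).sign) •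
            (X (k, l') * X (k', l) * C p b) else 0)
    = ∑ p : Fin I.card, ∑ b : Fin I.card,
        ((((iq p : ℕ) : ℤ) - (k : ℤ)).sign + (((jq b : ℕ) : ℤ) - (l : ℤ)).sign) •
          (X (k, jq b) * X (iq p, l) * C p b) from ?_]
  · -- split the sign sum and match both halves
    simp only [add_smul, Finset.sum_add_distrib]
    congr 1
    · apply Finset.sum_congr rfl
      intro q _
      have hmat : (Matrix.of fun a b =>
          (X (if a = q then k else iq a, jq b) : MvPolynomial (Fin m × Fin n) ℂ))
          = M.updateRow q (fun b => X (k, jq b)) := by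
        ext a b
        rw [Matrix.of_apply, Matrix.updateRow_apply]
        split_ifs with h <;> rfl
      rw [hmat, det_updateRow_eq_sum, Finset.mul_sum, Finset.smul_sum]
      apply Finset.sum_congr rfl
      intro b _
      simp only [hC]
      congr 1
      ring
    · rw [Finset.sum_comm]
      apply Finset.sum_congr rfl
      intro q _
      have hmat : (Matrix.of fun a b =>
          (X (iq a, if b = q then l else jq b) : MvPolynomial (Fin m × Fin n) ℂ))
          = M.updateCol q (fun a => X (iq a, l)) := by
        ext a b
        rw [Matrix.of_apply, Matrix.updateCol_apply]
        split_ifs with h <;> rfl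
      rw [hmat, det_updateCol_eq_sum, Finset.mul_sum, Finset.smul_sum]
      apply Finset.sum_congr rfl
      intro p _
      simp only [hC]
      congr 1
      ring
  · -- the collapsing computation
    refine (Finset.sum_congr rfl fun k' _ => Finset.sum_comm).trans ?_
    rw [Finset.sum_comm]
    apply Finset.sum_congr rfl; intro p _
    simp only [Prod.mk.injEq, ite_and, Finset.sum_ite_irrel, Finset.sum_const_zero,
      Finset.sum_ite_eq, Finset.mem_univ, if_true]
    rw [Finset.sum_comm]
    simp only [Finset.sum_ite_eq, Finset.mem_univ, if_true]
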